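/- Let H be a subspace of a real inner product space V and suppose V = H ⊕ H^⊥ (e.g., V smooth vector fields with L² inner product, H^⊥ characterized as those v orthogonal to all of H). If X ∈ V decomposes as X = X_H + X_⊥ with X_H ∈ H, X_⊥ ∈ H^⊥, this decomposition is unique; applied to Lemma: every tangent vector u∘φ ∈ T_φ Diff(M) decomposes uniquely as a vertical part (u_v with div(ρ u_v) = 0, ρ = Jac(φ^{-1})) plus a horizontal part of the form A^{-1}(ρ ∇p) ∘ φ, given that every smooth vector field u can be written u = A^{-1}(ρ∇p) + A^{-1}(ρ w̃) with w̃ divergence-free via the Helmholtz decomposition of (1/ρ)Au. -/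
import Mathlib


open MeasureTheory
open scoped RealInnerProductSpace

/-- Every smooth vector field `u` decomposes uniquely as a horizontal part
`A⁻¹(ρ∇p)` plus a vertical part `v` with `div(ρ v) = 0`, and the two summands are orthogonal
for the inner product `⟨u₁,u₂⟩_G = ∫ g(A u₁, u₂) μ`.  (Hypotheses: `A` an invertible linear
operator with inverse `Ainv`, self-adjoint and strictly positive for L²; the divergence
theorem and integration by parts hold; `ρ > 0`; and `L_ρ(p) = -div(ρ A⁻¹(ρ∇p))` is surjective
onto zero-mean functions — the Helmholtz-type solvability used in the Lemma.) -/
theorem vertical_horizontal_decomposition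
    {M E : Type*} [MeasurableSpace M] (μ : Measure M)
    [NormedAddCommGroup E] [InnerProductSpace ℝ E]
    (grad : (M → ℝ) → (M → E)) (dvg : (M → E) →ₗ[ℝ] (M → ℝ))
    (A : (M → E) →ₗ[ℝ] (M → E)) (Ainv : (M → E) →ₗ[ℝ] (M → E))
    (hAinv : ∀ z : M → E, A (Ainv z) = z ∧ Ainv (A z) = z)
    (hdivthm : ∀ z : M → E, ∫ x, dvg z x ∂μ = 0)
    (hIBP : ∀ (f : M → ℝ) (z : M → E),
        ∫ x, f x * dvg z x ∂μ = -∫ x, ⟪z x, grad f x⟫ ∂μ)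
    (hApos : ∀ z : M → E, (∃ x, z x ≠ 0) → 0 < ∫ x, ⟪A z x, z x⟫ ∂μ)
    (ρ : M → ℝ) (hρpos : ∀ x, 0 < ρ x)
    (hLsurj : ∀ f : M → ℝ, (∫ x, f x ∂μ = 0) →
        ∃ p : M → ℝ, ∀ x, -(dvg (fun y => ρ y • Ainv (fun z => ρ z • grad p z) y) x) = f x) :
    ∀ u : M → E,
      -- existence of the decomposition
      (∃ (p : M → ℝ) (v : M → E),
        (∀ x, u x = Ainv (fun z => ρ z • grad p z) x + v x)
        ∧ (∀ x, dvg (fun y => ρ y • v y) x = 0))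
      -- uniqueness of the decomposition
      ∧ (∀ (p₁ p₂ : M → ℝ) (v₁ v₂ : M → E),
          (∀ x, u x = Ainv (fun z => ρ z • grad p₁ z) x + v₁ x) →
          (∀ x, dvg (fun y => ρ y • v₁ y) x = 0) →
          (∀ x, u x = Ainv (fun z => ρ z • grad p₂ z) x + v₂ x) →
          (∀ x, dvg (fun y => ρ y • v₂ y) x = 0) →
          (∀ x, Ainv (fun z => ρ z • grad p₁ z) x = Ainv (fun z => ρ z • grad p₂ z) x)
          ∧ v₁ = v₂)
      -- G-orthogonality of the horizontal and vertical summands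
      ∧ (∀ (p : M → ℝ) (v : M → E),
          (∀ x, dvg (fun y => ρ y • v y) x = 0) →
          ∫ x, ⟪A (Ainv (fun z => ρ z • grad p z)) x, v x⟫ ∂μ = 0) := by
  -- integrability of all "quadratic form" functions, from strict positivity
  have intQ : ∀ z : M → E, Integrable (fun x => ⟪A z x, z x⟫) μ := by
    intro z
    by_cases hz : ∃ x, z x ≠ 0
    · have h1 := hApos z hz
      by_contra hni
      rw [MeasureTheory.integral_undef hni] at h1
      exact lt_irrefl 0 h1
    · push_neg at hz
      have hz0 : z = 0 := funext fun x => hz x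
      rw [hz0]
      simpa using (integrable_zero M ℝ μ)
  -- a swap lemma for the inner-product integrands
  have swap : ∀ (p : M → ℝ) (h b : M → E),
      A h = (fun z => ρ z • grad p z) →
      ∀ x, ⟪ρ x • b x, grad p x⟫ = ⟪A h x, b x⟫ := by
    intro p h b hA x
    rw [hA]
    show ⟪ρ x • b x, grad p x⟫ = ⟪ρ x • grad p x, b x⟫
    rw [real_inner_smul_left, real_inner_smul_left, real_inner_comm]
  intro u
  refine ⟨?_, ?_, ?_⟩
  · -- EXISTENCE
    have hzm : ∫ x, -(dvg (fun y => ρ y • u y) x) ∂μ = 0 := by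
      have h1 : ∫ x, -(dvg (fun y => ρ y • u y) x) ∂μ
          = -∫ x, dvg (fun y => ρ y • u y) x ∂μ := integral_neg _
      rw [h1, hdivthm]
      ring
    obtain ⟨p, hp⟩ := hLsurj (fun x => -(dvg (fun y => ρ y • u y) x)) hzm
    refine ⟨p, fun x => u x - Ainv (fun z => ρ z • grad p z) x, fun x => by rw [add_comm, sub_add_cancel], ?_⟩
    intro x
    have hfun : (fun y => ρ y • (u y - Ainv (fun z => ρ z • grad p z) y))
        = (fun y => ρ y • u y) - fun y => ρ y • Ainv (fun z => ρ z • grad p z) y := by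
      funext y
      show ρ y • (u y - _) = ρ y • u y - ρ y • _
      rw [smul_sub]
    rw [hfun, map_sub, Pi.sub_apply]
    have hpx := hp x
    have : dvg (fun y => ρ y • Ainv (fun z => ρ z • grad p z) y) x
        = dvg (fun y => ρ y • u y) x := by
      have := neg_injective hpx
      exact this
    rw [this, sub_self]
  · -- UNIQUENESS
    intro p₁ p₂ v₁ v₂ hu₁ hv₁ hu₂ hv₂
    set h₁ : M → E := Ainv (fun z => ρ z • grad p₁ z) with hh₁
    set h₂ : M → E := Ainv (fun z => ρ z • grad p₂ z) with hh₂
    have hA1 : A h₁ = fun z => ρ z • grad p₁ z := (hAinv _).1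
    have hA2 : A h₂ = fun z => ρ z • grad p₂ z := (hAinv _).1
    set w : M → E := fun x => h₁ x - h₂ x with hw
    have hdiff : ∀ x, w x = v₂ x - v₁ x := by
      intro x
      have e : h₁ x + v₁ x = h₂ x + v₂ x := (hu₁ x).symm.trans (hu₂ x)
      show h₁ x - h₂ x = v₂ x - v₁ x
      rw [sub_eq_sub_iff_add_eq_add]
      rw [e]; exact add_comm _ _
    -- div (ρ w) = 0
    have hρw : (fun y => ρ y • w y)
        = (fun y => ρ y • v₂ y) - fun y => ρ y • v₁ y := by
      funext y
      show ρ y • w y = ρ y • v₂ y - ρ y • v₁ y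
      rw [hdiff y, smul_sub]
    have hdvgρw : ∀ x, dvg (fun y => ρ y • w y) x = 0 := by
      intro x
      rw [hρw, map_sub, Pi.sub_apply, hv₂ x, hv₁ x, sub_self]
    -- div (ρ h₁) = div (ρ h₂) = div (ρ u)
    have hρh : ∀ (h v : M → E), (∀ x, u x = h x + v x) →
        (fun y => ρ y • h y) = (fun y => ρ y • u y) - fun y => ρ y • v y := by
      intro h v huv
      funext y
      show ρ y • h y = ρ y • u y - ρ y • v y
      have : h y = u y - v y := by rw [huv y]; abel
      rw [this, smul_sub]
    have hdvg₁ : ∀ x, dvg (fun y => ρ y • h₁ y) x = dvg (fun y => ρ y • u y) x := by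
      intro x
      rw [hρh h₁ v₁ hu₁, map_sub, Pi.sub_apply, hv₁ x, sub_zero]
    have hdvg₂ : ∀ x, dvg (fun y => ρ y • h₂ y) x = dvg (fun y => ρ y • u y) x := by
      intro x
      rw [hρh h₂ v₂ hu₂, map_sub, Pi.sub_apply, hv₂ x, sub_zero]
    -- ∫ q₁ = ∫ s₁₂  via two integrations by parts
    have ibpA := hIBP p₁ (fun y => ρ y • h₁ y)
    have ibpB := hIBP p₁ (fun y => ρ y • h₂ y)
    have eA : (fun x => ⟪(fun y => ρ y • h₁ y) x, grad p₁ x⟫)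
        = fun x => ⟪A h₁ x, h₁ x⟫ := funext fun x => swap p₁ h₁ h₁ hA1 x
    have eB : (fun x => ⟪(fun y => ρ y • h₂ y) x, grad p₁ x⟫)
        = fun x => ⟪A h₁ x, h₂ x⟫ := funext fun x => swap p₁ h₁ h₂ hA1 x
    have eLHS : (fun x => p₁ x * dvg (fun y => ρ y • h₁ y) x)
        = fun x => p₁ x * dvg (fun y => ρ y • h₂ y) x := by
      funext x; rw [hdvg₁ x, hdvg₂ x]
    rw [eA] at ibpA
    rw [eB] at ibpB
    rw [eLHS, ibpB] at ibpA
    have hq₁s₁₂ : ∫ x, ⟪A h₁ x, h₂ x⟫ ∂μ = ∫ x, ⟪A h₁ x, h₁ x⟫ ∂μ := neg_injective ibpA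
    -- Integrability of s₁₂
    have hs₁₂ : Integrable (fun x => ⟪A h₁ x, h₂ x⟫) μ := by
      by_contra hint
      have h0 : ∫ x, ⟪A h₁ x, h₂ x⟫ ∂μ = 0 := MeasureTheory.integral_undef hint
      have hq₁0 : ∫ x, ⟪A h₁ x, h₁ x⟫ ∂μ = 0 := by rw [← hq₁s₁₂, h0]
      have hz : ∀ x, h₁ x = 0 := by
        intro x
        by_contra hx
        have := hApos h₁ ⟨x, hx⟩
        rw [hq₁0] at this
        exact lt_irrefl 0 this
      have h10 : h₁ = 0 := funext fun x => hz x
      apply hint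
      have hA10 : A h₁ = 0 := by rw [h10, map_zero]
      have : (fun x => ⟪A h₁ x, h₂ x⟫) = fun _ => (0 : ℝ) := by
        funext x; rw [hA10]; simp
      rw [this]
      simpa using (integrable_zero M ℝ μ)
    -- Integrability of s₂₁
    have hs₂₁ : Integrable (fun x => ⟪A h₂ x, h₁ x⟫) μ := by
      have e : (fun x => ⟪A h₂ x, h₁ x⟫)
          = fun x => (⟪A (h₁ + h₂) x, (h₁ + h₂) x⟫ - ⟪A h₁ x, h₁ x⟫ - ⟪A h₂ x, h₂ x⟫)
              - ⟪A h₁ x, h₂ x⟫ := by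
        funext x
        rw [map_add]
        simp only [Pi.add_apply]
        rw [inner_add_left, inner_add_right, inner_add_right]
        ring
      rw [e]
      exact (((intQ (h₁ + h₂)).sub (intQ h₁)).sub (intQ h₂)).sub hs₁₂
    -- the two pairings with w are integrable
    have hg₁ : Integrable (fun x => ⟪A h₁ x, w x⟫) μ := by
      have e : (fun x => ⟪A h₁ x, w x⟫)
          = fun x => ⟪A h₁ x, h₁ x⟫ - ⟪A h₁ x, h₂ x⟫ := by
        funext x
        show ⟪A h₁ x, h₁ x - h₂ x⟫ = _
        rw [inner_sub_right]
      rw [e]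
      exact (intQ h₁).sub hs₁₂
    have hg₂ : Integrable (fun x => ⟪A h₂ x, w x⟫) μ := by
      have e : (fun x => ⟪A h₂ x, w x⟫)
          = fun x => ⟪A h₂ x, h₁ x⟫ - ⟪A h₂ x, h₂ x⟫ := by
        funext x
        show ⟪A h₂ x, h₁ x - h₂ x⟫ = _
        rw [inner_sub_right]
      rw [e]
      exact hs₂₁.sub (intQ h₂)
    -- both pairings have integral 0, by IBP against the divergence-free ρ w
    have hzero : ∀ (p : M → ℝ) (h : M → E), A h = (fun z => ρ z • grad p z) →
        ∫ x, ⟪A h x, w x⟫ ∂μ = 0 := by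
      intro p h hA
      have ibp := hIBP p (fun y => ρ y • w y)
      have eL : (fun x => p x * dvg (fun y => ρ y • w y) x) = fun _ => (0 : ℝ) := by
        funext x; rw [hdvgρw x, mul_zero]
      have eR : (fun x => ⟪(fun y => ρ y • w y) x, grad p x⟫)
          = fun x => ⟪A h x, w x⟫ := funext fun x => swap p h w hA x
      rw [eL, eR] at ibp
      simp only [integral_zero] at ibp
      have := ibp.symm
      rwa [neg_eq_zero] at this
    have hg₁0 : ∫ x, ⟪A h₁ x, w x⟫ ∂μ = 0 := hzero p₁ h₁ hA1
    have hg₂0 : ∫ x, ⟪A h₂ x, w x⟫ ∂μ = 0 := hzero p₂ h₂ hA2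
    -- the G-norm of w vanishes
    have hAw : A w = A h₁ - A h₂ := by
      have : w = h₁ - h₂ := rfl
      rw [this, map_sub]
    have hIeq : ∫ x, ⟪A w x, w x⟫ ∂μ = 0 := by
      have e : (fun x => ⟪A w x, w x⟫)
          = fun x => ⟪A h₁ x, w x⟫ - ⟪A h₂ x, w x⟫ := by
        funext x
        rw [hAw, Pi.sub_apply, inner_sub_left]
      rw [e, integral_sub hg₁ hg₂, hg₁0, hg₂0, sub_self]
    have hw0 : ∀ x, w x = 0 := by
      intro x
      by_contra hx
      have := hApos w ⟨x, hx⟩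
      rw [hIeq] at this
      exact lt_irrefl 0 this
    constructor
    · intro x
      exact sub_eq_zero.mp (hw0 x)
    · funext x
      have h1 : v₂ x - v₁ x = 0 := by rw [← hdiff x]; exact hw0 x
      exact (sub_eq_zero.mp h1).symm
  · -- ORTHOGONALITY
    intro p v hv
    have hA : A (Ainv (fun z => ρ z • grad p z)) = fun z => ρ z • grad p z := (hAinv _).1
    have ibp := hIBP p (fun y => ρ y • v y)
    have eL : (fun x => p x * dvg (fun y => ρ y • v y) x) = fun _ => (0 : ℝ) := by
      funext x; rw [hv x, mul_zero]
    have eR : (fun x => ⟪(fun y => ρ y • v y) x, grad p x⟫)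
        = fun x => ⟪A (Ainv (fun z => ρ z • grad p z)) x, v x⟫ :=
      funext fun x => swap p (Ainv (fun z => ρ z • grad p z)) v hA x
    rw [eL, eR] at ibp
    simp only [integral_zero] at ibp
    have := ibp.symm
    rwa [neg_eq_zero] at this
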